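/- arXiv:2307.00795 — 3 statements merged into one kernel-verified Lean document; each statement's English description precedes it below -/
import Mathlib

section
/- Let $\Sigma$ and $\hat\Sigma$ be symmetric positive definite $d\times d$ matrices, let $\beta \in \mathbb{R}^d$, and let $v = \frac{1}{n}\sum_{i=1}^n X_i(Y_i - X_i^\top \beta)$ where $X_i \in \mathbb{R}^d$, $Y_i \in \mathbb{R}$. Define the remainder $\mathcal{R} = \hat\Sigma^{-1}(\Sigma - \hat\Sigma)\Sigma^{-1}(\Sigma - \hat\Sigma)\Sigma^{-1} v$ and $\mathcal{D}_\Sigma = \|\Sigma^{-1/2}\hat\Sigma\Sigma^{-1/2} - I_d\|_{\mathrm{op}}$. Then $\|\mathcal{R}\|_\Sigma \leq \frac{\mathcal{D}_\Sigma^2}{\lambda_{\min}(\Sigma^{-1/2}\hat\Sigma\Sigma^{-1/2})}\left\|\frac{1}{n}\sum_{i=1}^n \Sigma^{-1/2}X_i(Y_i - X_i^\top\beta)\right\|_2$. -/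
open Matrix

/-- Operator norm (ℓ²→ℓ² norm) of a real square matrix. -/
noncomputable def opNorm {d : ℕ} (A : Matrix (Fin d) (Fin d) ℝ) : ℝ :=
  ‖Matrix.toEuclideanCLM (𝕜 := ℝ) A‖

/-- Smallest eigenvalue of a symmetric matrix, via the Rayleigh quotient. -/
noncomputable def lamMin {d : ℕ} (A : Matrix (Fin d) (Fin d) ℝ) : ℝ :=
  ⨅ u : {v : Fin d → ℝ // ∑ i, v i ^ 2 = 1}, (u.1 ⬝ᵥ A.mulVec u.1)

noncomputable def en {d : ℕ} (x : Fin d → ℝ) : ℝ := Real.sqrt (∑ i, x i ^ 2)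

lemma en_eq_norm {d : ℕ} (x : Fin d → ℝ) :
    en x = ‖(WithLp.equiv 2 (Fin d → ℝ)).symm x‖ := by
  rw [EuclideanSpace.norm_eq]; simp [en, Real.norm_eq_abs, sq_abs]

lemma dot_eq_inner {d : ℕ} (x y : Fin d → ℝ) :
    x ⬝ᵥ y = inner ℝ ((WithLp.equiv 2 (Fin d → ℝ)).symm x) ((WithLp.equiv 2 (Fin d → ℝ)).symm y) := by
  simp [PiLp.inner_apply, dotProduct, RCLike.inner_apply, mul_comm]

lemma dot_self_eq {d : ℕ} (x : Fin d → ℝ) : x ⬝ᵥ x = ∑ i, x i ^ 2 := by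
  simp [dotProduct, sq]

lemma en_nonneg {d : ℕ} (x : Fin d → ℝ) : 0 ≤ en x := Real.sqrt_nonneg _

lemma en_mulVec_le {d : ℕ} (A : Matrix (Fin d) (Fin d) ℝ) (x : Fin d → ℝ) :
    en (A.mulVec x) ≤ opNorm A * en x := by
  rw [en_eq_norm, en_eq_norm]
  have h := (Matrix.toEuclideanCLM (𝕜 := ℝ) A).le_opNorm ((WithLp.equiv 2 (Fin d → ℝ)).symm x)
  simp only [WithLp.equiv_symm_apply, Matrix.toEuclideanCLM_toLp] at h ⊢
  exact h

lemma opNorm_mul_le {d : ℕ} (A B : Matrix (Fin d) (Fin d) ℝ) :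
    opNorm (A * B) ≤ opNorm A * opNorm B := by
  unfold opNorm; rw [_root_.map_mul]; exact norm_mul_le _ _

lemma abs_dot_le {d : ℕ} (x y : Fin d → ℝ) : |x ⬝ᵥ y| ≤ en x * en y := by
  rw [dot_eq_inner, en_eq_norm, en_eq_norm]
  exact abs_real_inner_le_norm _ _

lemma bdd_below_rayleigh {d : ℕ} (A : Matrix (Fin d) (Fin d) ℝ) :
    BddBelow (Set.range fun u : {v : Fin d → ℝ // ∑ i, v i ^ 2 = 1} => u.1 ⬝ᵥ A.mulVec u.1) := by
  refine ⟨-(opNorm A), ?_⟩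
  rintro _ ⟨u, rfl⟩
  have h1 : en u.1 = 1 := by rw [en, u.2, Real.sqrt_one]
  have h2 : |u.1 ⬝ᵥ A.mulVec u.1| ≤ en u.1 * en (A.mulVec u.1) := abs_dot_le _ _
  have h3 := en_mulVec_le A u.1
  rw [h1, one_mul] at h2
  nlinarith [abs_nonneg (u.1 ⬝ᵥ A.mulVec u.1), neg_abs_le (u.1 ⬝ᵥ A.mulVec u.1)]

lemma lamMin_le {d : ℕ} (A : Matrix (Fin d) (Fin d) ℝ) (y : Fin d → ℝ) (hy : ∑ i, y i ^ 2 = 1) :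
    lamMin A ≤ y ⬝ᵥ A.mulVec y :=
  ciInf_le (bdd_below_rayleigh A) ⟨y, hy⟩

lemma lamMin_pos {d : ℕ} (hd : 0 < d) {A : Matrix (Fin d) (Fin d) ℝ} (hA : A.PosDef) :
    0 < lamMin A := by
  set f : (Fin d → ℝ) → ℝ := fun v => v ⬝ᵥ A.mulVec v with hf
  have hcont : Continuous f := by
    have : f = fun v => ∑ i, v i * ∑ j, A i j * v j := by
      funext v; simp [f, dotProduct, mulVec]
    rw [this]
    exact continuous_finset_sum _ fun i _ => ((continuous_apply i).mul
      (continuous_finset_sum _ fun j _ => continuous_const.mul (continuous_apply j)))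
  set Sp : Set (Fin d → ℝ) := {v | ∑ i, v i ^ 2 = 1} with hSp
  have hclosed : IsClosed Sp :=
    isClosed_eq (continuous_finset_sum _ fun i _ => (continuous_apply i).pow 2) continuous_const
  have hbdd : Bornology.IsBounded Sp := by
    rw [Metric.isBounded_iff_subset_closedBall 0]
    refine ⟨1, fun v hv => ?_⟩
    rw [Metric.mem_closedBall, dist_zero_right]
    rw [pi_norm_le_iff_of_nonneg zero_le_one]
    intro i
    rw [Real.norm_eq_abs, abs_le_one_iff_mul_self_le_one, ← sq]
    calc v i ^ 2 ≤ ∑ j, v j ^ 2 :=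
          Finset.single_le_sum (fun j _ => sq_nonneg (v j)) (Finset.mem_univ i)
      _ = 1 := hv
  have hcpt : IsCompact Sp := Metric.isCompact_of_isClosed_isBounded hclosed hbdd
  have hne : Sp.Nonempty := by
    refine ⟨fun i => if i = ⟨0, hd⟩ then 1 else 0, ?_⟩
    simp [hSp, Finset.sum_ite_eq']
  obtain ⟨x₀, hx₀S, hx₀min⟩ := hcpt.exists_isMinOn hne hcont.continuousOn
  have hx₀ne : x₀ ≠ 0 := by
    intro h
    rw [hSp] at hx₀S
    simp [h] at hx₀S
  have hpos : 0 < f x₀ := by simpa [f] using hA.dotProduct_mulVec_pos hx₀ne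
  have hnety : Nonempty {v : Fin d → ℝ // ∑ i, v i ^ 2 = 1} := ⟨⟨hne.choose, hne.choose_spec⟩⟩
  have : f x₀ ≤ lamMin A := le_ciInf fun u => hx₀min u.2
  linarith

lemma en_pos_of_ne {d : ℕ} {y : Fin d → ℝ} (hy : y ≠ 0) : 0 < en y := by
  rw [en_eq_norm, norm_pos_iff]
  simpa using hy

lemma en_inv_mulVec_le {d : ℕ} {A : Matrix (Fin d) (Fin d) ℝ} (hA : A.PosDef)
    (hpos : 0 < lamMin A) (x : Fin d → ℝ) :
    en (A⁻¹.mulVec x) ≤ en x / lamMin A := by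
  set y := A⁻¹.mulVec x with hy
  have hAy : A.mulVec y = x := by
    rw [hy, Matrix.mulVec_mulVec, Matrix.mul_nonsing_inv _ hA.det_pos.ne'.isUnit,
      Matrix.one_mulVec]
  by_cases h0 : y = 0
  · rw [h0]
    have : en (0 : Fin d → ℝ) = 0 := by simp [en]
    rw [this]
    exact div_nonneg (Real.sqrt_nonneg _) hpos.le
  · have hc : 0 < en y := en_pos_of_ne h0
    have hsq : ∑ i, y i ^ 2 = en y ^ 2 := by
      rw [en, Real.sq_sqrt (Finset.sum_nonneg fun i _ => sq_nonneg _)]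
    have hunit : ∑ i, ((en y)⁻¹ • y) i ^ 2 = 1 := by
      simp only [Pi.smul_apply, smul_eq_mul, mul_pow, ← Finset.mul_sum]
      rw [hsq]
      field_simp
    have h1 := lamMin_le A ((en y)⁻¹ • y) hunit
    have h2 : ((en y)⁻¹ • y) ⬝ᵥ A.mulVec ((en y)⁻¹ • y) = (en y)⁻¹ * ((en y)⁻¹ * (y ⬝ᵥ x)) := by
      rw [Matrix.mulVec_smul, smul_dotProduct, dotProduct_smul, hAy]
      simp [smul_eq_mul]
    have h3 : y ⬝ᵥ x ≤ en y * en x := le_trans (le_abs_self _) (abs_dot_le y x)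
    rw [h2] at h1
    rw [le_div_iff₀ hpos]
    have hinv : (en y)⁻¹ * ((en y)⁻¹ * (y ⬝ᵥ x)) ≤ en x / en y := by
      rw [div_eq_mul_inv]
      have := mul_le_mul_of_nonneg_left h3 (by positivity : (0:ℝ) ≤ (en y)⁻¹ * (en y)⁻¹)
      calc (en y)⁻¹ * ((en y)⁻¹ * (y ⬝ᵥ x)) = (en y)⁻¹ * (en y)⁻¹ * (y ⬝ᵥ x) := by ring
        _ ≤ (en y)⁻¹ * (en y)⁻¹ * (en y * en x) := this
        _ = en x * (en y)⁻¹ := by field_simp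
    have h4 : lamMin A ≤ en x / en y := le_trans h1 hinv
    rw [le_div_iff₀ hc] at h4
    linarith


set_option maxHeartbeats 1000000 in
/-- Deterministic bound on the second-order remainder of the least-squares
expansion: with `v = (1/n)∑ᵢ Xᵢ(Yᵢ - Xᵢᵀβ)`,
`R = Σ̂⁻¹(Σ - Σ̂)Σ⁻¹(Σ - Σ̂)Σ⁻¹ v` and `𝒟_Σ = ‖Σ^{-1/2}Σ̂Σ^{-1/2} - I‖_op`, one has
`‖R‖_Σ ≤ 𝒟_Σ² / λ_min(Σ^{-1/2}Σ̂Σ^{-1/2}) · ‖(1/n)∑ᵢ Σ^{-1/2}Xᵢ(Yᵢ - Xᵢᵀβ)‖₂`. -/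
theorem stmt2 {d n : ℕ} (hn : 0 < n)
    (S Shat : Matrix (Fin d) (Fin d) ℝ) (hS : S.PosDef) (hShat : Shat.PosDef)
    (β : Fin d → ℝ) (X : Fin n → Fin d → ℝ) (Y : Fin n → ℝ) :
    let Risqr := ((hS.posSemidef.1.eigenvectorUnitary : Matrix (Fin d) (Fin d) ℝ) * diagonal (Real.sqrt ∘ hS.posSemidef.1.eigenvalues) *
      (star hS.posSemidef.1.eigenvectorUnitary : Matrix (Fin d) (Fin d) ℝ))⁻¹
    let v : Fin d → ℝ := fun k => (1 / (n : ℝ)) * ∑ i, X i k * (Y i - X i ⬝ᵥ β)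
    let Rem : Fin d → ℝ := (Shat⁻¹ * (S - Shat) * S⁻¹ * (S - Shat) * S⁻¹).mulVec v
    Real.sqrt (Rem ⬝ᵥ S.mulVec Rem) ≤
      opNorm (Risqr * Shat * Risqr - 1) ^ 2 / lamMin (Risqr * Shat * Risqr) *
        Real.sqrt (∑ k, ((1 / (n : ℝ)) * ∑ i, Risqr.mulVec (X i) k * (Y i - X i ⬝ᵥ β)) ^ 2) := by
  intro Risqr v Rem
  rcases Nat.eq_zero_or_pos d with hd | hd
  · subst hd
    simp [dotProduct]
  -- setup
  set Q := ((hS.posSemidef.1.eigenvectorUnitary : Matrix (Fin d) (Fin d) ℝ) * diagonal (Real.sqrt ∘ hS.posSemidef.1.eigenvalues) *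
      (star hS.posSemidef.1.eigenvectorUnitary : Matrix (Fin d) (Fin d) ℝ)) with hQdef
  have hQQ : Q * Q = S := by
    have hspec := hS.posSemidef.1.spectral_theorem
    rw [Unitary.conjStarAlgAut_apply] at hspec
    have hU : (star hS.posSemidef.1.eigenvectorUnitary : Matrix (Fin d) (Fin d) ℝ) *
        (hS.posSemidef.1.eigenvectorUnitary : Matrix (Fin d) (Fin d) ℝ) = 1 :=
      hS.posSemidef.1.eigenvectorUnitary.2.1
    have hD : diagonal (Real.sqrt ∘ hS.posSemidef.1.eigenvalues) *
        diagonal (Real.sqrt ∘ hS.posSemidef.1.eigenvalues) =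
        diagonal (RCLike.ofReal ∘ hS.posSemidef.1.eigenvalues) := by
      rw [diagonal_mul_diagonal]; congr 1; funext i
      simp [Real.mul_self_sqrt (hS.posSemidef.eigenvalues_nonneg i)]
    conv_rhs => rw [hspec]
    rw [hQdef, ← hD]
    simp only [Matrix.mul_assoc]
    rw [← Matrix.mul_assoc (star hS.posSemidef.1.eigenvectorUnitary : Matrix (Fin d) (Fin d) ℝ)
      (hS.posSemidef.1.eigenvectorUnitary : Matrix (Fin d) (Fin d) ℝ), hU, Matrix.one_mul]
  have hQherm : Qᴴ = Q := by
    rw [hQdef]; simp [Matrix.conjTranspose_mul, Matrix.mul_assoc, Matrix.star_eq_conjTranspose]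
  clear_value Q
  have hdetQ : IsUnit Q.det := by
    have hdet : Q.det * Q.det = S.det := by rw [← Matrix.det_mul, hQQ]
    have : Q.det ≠ 0 := by
      intro h; rw [h, mul_zero] at hdet
      exact hS.det_pos.ne' hdet.symm
    exact this.isUnit
  have hQR : Q * Q⁻¹ = 1 := Matrix.mul_nonsing_inv _ hdetQ
  have hRQ : Q⁻¹ * Q = 1 := Matrix.nonsing_inv_mul _ hdetQ
  have hRherm : (Q⁻¹)ᴴ = Q⁻¹ := Matrix.IsHermitian.inv hQherm
  have hRR : Q⁻¹ * Q⁻¹ = S⁻¹ := by rw [← hQQ, Matrix.mul_inv_rev]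
  have hRinv : (Q⁻¹)⁻¹ = Q := Matrix.nonsing_inv_nonsing_inv _ hdetQ
  set A := Risqr * Shat * Risqr with hAdef
  have hRisqr : Risqr = Q⁻¹ := by subst hQdef; rfl
  -- A is positive definite
  have hApd : A.PosDef := by
    refine Matrix.PosDef.of_dotProduct_mulVec_pos ?_ ?_
    · show Aᴴ = A
      rw [hAdef, hRisqr, Matrix.conjTranspose_mul, Matrix.conjTranspose_mul, hRherm,
        hShat.1.eq, Matrix.mul_assoc]
    · intro x hx
      have hRx : Q⁻¹.mulVec x ≠ 0 := by
        intro h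
        apply hx
        have : (Q * Q⁻¹).mulVec x = x := by rw [hQR, Matrix.one_mulVec]
        rw [← this, ← Matrix.mulVec_mulVec, h, Matrix.mulVec_zero]
      have key : star x ⬝ᵥ A.mulVec x =
          star (Q⁻¹.mulVec x) ⬝ᵥ Shat.mulVec (Q⁻¹.mulVec x) := by
        simp only [star_trivial, hAdef, hRisqr]
        rw [← Matrix.mulVec_mulVec, ← Matrix.mulVec_mulVec, Matrix.dotProduct_mulVec,
          ← Matrix.mulVec_transpose]
        congr 1
        rw [show (Q⁻¹)ᵀ = Q⁻¹ from hRherm]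
      rw [key]
      exact hShat.dotProduct_mulVec_pos hRx
  have hlm : 0 < lamMin A := lamMin_pos hd hApd
  -- key matrix identity
  have hAinv : A⁻¹ = Q * Shat⁻¹ * Q := by
    rw [hAdef, hRisqr, Matrix.mul_inv_rev, Matrix.mul_inv_rev, hRinv, Matrix.mul_assoc]
  have hcancel : ∀ B : Matrix (Fin d) (Fin d) ℝ, Q * (Q⁻¹ * B) = B := fun B => by
    rw [← Matrix.mul_assoc, hQR, one_mul]
  have hcancel2 : ∀ B : Matrix (Fin d) (Fin d) ℝ, Q⁻¹ * (Q * B) = B := fun B => by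
    rw [← Matrix.mul_assoc, hRQ, one_mul]
  have hE : A - 1 = -(Q⁻¹ * (S - Shat) * Q⁻¹) := by
    have h1 : Q⁻¹ * S * Q⁻¹ = 1 := by
      rw [← hQQ, ← Matrix.mul_assoc Q⁻¹ Q Q, hRQ, one_mul, hQR]
    have h2 : Q⁻¹ * (S - Shat) * Q⁻¹ = Q⁻¹ * S * Q⁻¹ - Q⁻¹ * Shat * Q⁻¹ := by
      rw [Matrix.mul_sub, Matrix.sub_mul]
    rw [hAdef, hRisqr, h2, h1]
    abel
  have hKey : Q * (Shat⁻¹ * (S - Shat) * S⁻¹ * (S - Shat) * S⁻¹) =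
      A⁻¹ * ((A - 1) * (A - 1)) * Q⁻¹ := by
    rw [hAinv, hE, neg_mul_neg, ← hRR]
    simp only [Matrix.mul_assoc, hcancel, hcancel2]
  -- LHS equals en (Q.mulVec Rem)
  have hLHS : Real.sqrt (Rem ⬝ᵥ S.mulVec Rem) = en (Q.mulVec Rem) := by
    have : Rem ⬝ᵥ S.mulVec Rem = (Q.mulVec Rem) ⬝ᵥ (Q.mulVec Rem) := by
      rw [← hQQ, ← Matrix.mulVec_mulVec, Matrix.dotProduct_mulVec, ← Matrix.mulVec_transpose,
        show Qᵀ = Q from hQherm]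
    rw [this, en, ← dot_self_eq]
  rw [hLHS]
  -- rewrite Q.mulVec Rem
  have hQRem : Q.mulVec Rem = A⁻¹.mulVec (((A - 1) * (A - 1)).mulVec (Q⁻¹.mulVec v)) := by
    show Q.mulVec ((Shat⁻¹ * (S - Shat) * S⁻¹ * (S - Shat) * S⁻¹).mulVec v) = _
    rw [Matrix.mulVec_mulVec, hKey, Matrix.mulVec_mulVec, Matrix.mulVec_mulVec]
  -- RHS sqrt equals en (Q⁻¹.mulVec v)
  have hRHS : Real.sqrt (∑ k, ((1 / (n : ℝ)) * ∑ i, Risqr.mulVec (X i) k * (Y i - X i ⬝ᵥ β)) ^ 2)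
      = en (Q⁻¹.mulVec v) := by
    have hptw : ∀ k, (1 / (n : ℝ)) * ∑ i, Risqr.mulVec (X i) k * (Y i - X i ⬝ᵥ β)
        = (Q⁻¹.mulVec v) k := by
      intro k
      rw [hRisqr]
      show (1 / (n : ℝ)) * ∑ i, (Q⁻¹.mulVec (X i)) k * (Y i - X i ⬝ᵥ β) = (Q⁻¹.mulVec v) k
      simp only [Matrix.mulVec, dotProduct]
      show _ = ∑ j, Q⁻¹ k j * ((1 / (n : ℝ)) * ∑ i, X i j * (Y i - X i ⬝ᵥ β))
      simp only [dotProduct, Finset.mul_sum, Finset.sum_mul]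
      rw [Finset.sum_comm]
      refine Finset.sum_congr rfl fun j _ => Finset.sum_congr rfl fun i _ => ?_
      ring
    rw [en]
    simp only [hptw]
  rw [hRHS, hQRem]
  calc en (A⁻¹.mulVec (((A - 1) * (A - 1)).mulVec (Q⁻¹.mulVec v)))
      ≤ en (((A - 1) * (A - 1)).mulVec (Q⁻¹.mulVec v)) / lamMin A :=
        en_inv_mulVec_le hApd hlm _
    _ ≤ (opNorm (A - 1) ^ 2 * en (Q⁻¹.mulVec v)) / lamMin A := by
        gcongr
        calc en (((A - 1) * (A - 1)).mulVec (Q⁻¹.mulVec v))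
            ≤ opNorm ((A - 1) * (A - 1)) * en (Q⁻¹.mulVec v) := en_mulVec_le _ _
          _ ≤ (opNorm (A - 1) * opNorm (A - 1)) * en (Q⁻¹.mulVec v) :=
              mul_le_mul_of_nonneg_right (opNorm_mul_le _ _) (en_nonneg _)
          _ = opNorm (A - 1) ^ 2 * en (Q⁻¹.mulVec v) := by ring
    _ = opNorm (A - 1) ^ 2 / lamMin A * en (Q⁻¹.mulVec v) := by ring
end

section
/- Let $c \in \mathbb{R}^d$, let $\hat\beta^{(1)}, \ldots, \hat\beta^{(B)}$ be independent random vectors in $\mathbb{R}^d$, and let $\beta \in \mathbb{R}^d$ be fixed. Suppose for each $b$ the median bias satisfies $\frac{1}{2} - \min\{\mathbb{P}(c^\top(\hat\beta^{(b)} - \beta) > 0), \mathbb{P}(c^\top(\hat\beta^{(b)} - \beta) < 0)\} \leq \Delta$ for some $\Delta \in [0, 1/2]$. Then $\mathbb{P}\left(\min_{1\leq b\leq B} c^\top\hat\beta^{(b)} \leq c^\top\beta \leq \max_{1\leq b\leq B} c^\top\hat\beta^{(b)}\right) \geq 1 - \left(\frac{1}{2}-\Delta\right)^B - \left(\frac{1}{2}+\Delta\right)^B$.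 -/
open MeasureTheory ProbabilityTheory Matrix Finset

private lemma hulc_aux (a : ℝ) (ha : 0 ≤ a) (ha2 : a ≤ 1 - a) (n : ℕ) (p q : ℕ → ℝ)
    (hp : ∀ i, a ≤ p i) (hq : ∀ i, a ≤ q i) (hpq : ∀ i, p i + q i ≤ 1) :
    ∏ i ∈ range n, p i + ∏ i ∈ range n, q i ≤ a ^ n + (1 - a) ^ n := by
  induction n with
  | zero => norm_num
  | succ n ih =>
    rw [prod_range_succ, prod_range_succ]
    set P := ∏ i ∈ range n, p i with hP
    set Q := ∏ i ∈ range n, q i with hQ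
    have hP0 : 0 ≤ P := Finset.prod_nonneg fun i _ => le_trans ha (hp i)
    have hQ0 : 0 ≤ Q := Finset.prod_nonneg fun i _ => le_trans ha (hq i)
    have hPm : P ≤ (1 - a) ^ n := by
      rw [hP]
      calc ∏ i ∈ range n, p i ≤ ∏ i ∈ range n, (1 - a) := by
            apply Finset.prod_le_prod (fun i _ => le_trans ha (hp i))
            intro i _; linarith [hpq i, hq i]
        _ = (1 - a) ^ n := by rw [prod_const, card_range]
    have hQm : Q ≤ (1 - a) ^ n := by
      rw [hQ]
      calc ∏ i ∈ range n, q i ≤ ∏ i ∈ range n, (1 - a) := by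
            apply Finset.prod_le_prod (fun i _ => le_trans ha (hq i))
            intro i _; linarith [hpq i, hp i]
        _ = (1 - a) ^ n := by rw [prod_const, card_range]
    have hpn := hp n
    have hqn := hq n
    have hpqn := hpq n
    have hm0 : (0:ℝ) ≤ (1 - a) ^ n := pow_nonneg (by linarith) n
    have ha0 : (0:ℝ) ≤ a ^ n := pow_nonneg ha n
    rcases le_total Q P with h | h
    · have step1 : p n * P + q n * Q ≤ (1 - a) * P + a * Q := by
        nlinarith [mul_nonneg hQ0 (sub_nonneg.mpr hpn)]
      have step2 : (1 - a) * P + a * Q ≤ a ^ (n+1) + (1 - a) ^ (n+1) := by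
        have : (1 - a) * P + a * Q = a * (P + Q) + (1 - 2*a) * P := by ring
        rw [this, pow_succ, pow_succ]
        nlinarith
      linarith
    · have step1 : p n * P + q n * Q ≤ a * P + (1 - a) * Q := by
        nlinarith [mul_nonneg hP0 (sub_nonneg.mpr hqn)]
      have step2 : a * P + (1 - a) * Q ≤ a ^ (n+1) + (1 - a) ^ (n+1) := by
        have : a * P + (1 - a) * Q = a * (P + Q) + (1 - 2*a) * Q := by ring
        rw [this, pow_succ, pow_succ]
        nlinarith
      linarith

/-- HulC coverage lemma: if the independent estimators
`β̂⁽¹⁾, …, β̂⁽ᴮ⁾` each have median bias at most `Δ ∈ [0, 1/2]` along `c`, then the convex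
hull of `cᵀβ̂⁽ᵇ⁾` covers `cᵀβ` with probability at least `1 - (1/2-Δ)^B - (1/2+Δ)^B`. -/
theorem stmt11 {Ω : Type*} [MeasurableSpace Ω] (μ : Measure Ω) [IsProbabilityMeasure μ]
    {d B : ℕ} (hB : 1 ≤ B) (c β : Fin d → ℝ)
    (bhat : Fin B → Ω → Fin d → ℝ) (hmeas : ∀ b, Measurable (bhat b))
    (hindep : iIndepFun bhat μ)
    (Δ : ℝ) (hΔ0 : 0 ≤ Δ) (hΔ1 : Δ ≤ 1 / 2)
    (hbias : ∀ b, 1 / 2 -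
        min ((μ {ω | 0 < c ⬝ᵥ bhat b ω - c ⬝ᵥ β}).toReal)
            ((μ {ω | c ⬝ᵥ bhat b ω - c ⬝ᵥ β < 0}).toReal) ≤ Δ) :
    1 - (1 / 2 - Δ) ^ B - (1 / 2 + Δ) ^ B ≤
      (μ {ω | (∃ b, c ⬝ᵥ bhat b ω ≤ c ⬝ᵥ β) ∧ ∃ b, c ⬝ᵥ β ≤ c ⬝ᵥ bhat b ω}).toReal := by
  classical
  have hdot : Measurable fun v : Fin d → ℝ => c ⬝ᵥ v := by
    simp only [dotProduct]
    exact Finset.measurable_sum _ fun i _ => by fun_prop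
  set Sp : Fin B → Set Ω := fun b => {ω | 0 < c ⬝ᵥ bhat b ω - c ⬝ᵥ β} with hSpdef
  set Sq : Fin B → Set Ω := fun b => {ω | c ⬝ᵥ bhat b ω - c ⬝ᵥ β < 0} with hSqdef
  have hVp : MeasurableSet {v : Fin d → ℝ | 0 < c ⬝ᵥ v - c ⬝ᵥ β} :=
    measurableSet_lt measurable_const (hdot.sub measurable_const)
  have hVq : MeasurableSet {v : Fin d → ℝ | c ⬝ᵥ v - c ⬝ᵥ β < 0} :=
    measurableSet_lt (hdot.sub measurable_const) measurable_const
  have hSpMeas : ∀ b, MeasurableSet (Sp b) := fun b => (hmeas b) hVp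
  have hSqMeas : ∀ b, MeasurableSet (Sq b) := fun b => (hmeas b) hVq
  set p : Fin B → ℝ := fun b => (μ (Sp b)).toReal with hpdef
  set q : Fin B → ℝ := fun b => (μ (Sq b)).toReal with hqdef
  set a : ℝ := 1 / 2 - Δ with hadef
  have ha0 : 0 ≤ a := by rw [hadef]; linarith
  have ha2 : a ≤ 1 - a := by rw [hadef]; linarith
  have hpa : ∀ b, a ≤ p b := fun b =>
    le_trans (by have := hbias b; rw [hadef]; exact by linarith) (min_le_left _ _)
  have hqa : ∀ b, a ≤ q b := fun b =>
    le_trans (by have := hbias b; rw [hadef]; exact by linarith) (min_le_right _ _)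
  have hpq1 : ∀ b, p b + q b ≤ 1 := by
    intro b
    have hdisj : Disjoint (Sp b) (Sq b) := by
      rw [Set.disjoint_left]
      intro ω h1 h2
      simp only [hSpdef, hSqdef, Set.mem_setOf_eq] at h1 h2
      linarith
    have hun : μ (Sp b) + μ (Sq b) = μ (Sp b ∪ Sq b) := (measure_union hdisj (hSqMeas b)).symm
    have hle : μ (Sp b) + μ (Sq b) ≤ 1 := hun ▸ prob_le_one
    have := ENNReal.toReal_mono ENNReal.one_ne_top hle
    rw [ENNReal.toReal_add (measure_ne_top _ _) (measure_ne_top _ _)] at this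
    simpa using this
  -- independence products
  have hA : μ (⋂ b, Sp b) = ∏ b, μ (Sp b) :=
    hindep.meas_iInter fun b => ⟨_, hVp, rfl⟩
  have hC : μ (⋂ b, Sq b) = ∏ b, μ (Sq b) :=
    hindep.meas_iInter fun b => ⟨_, hVq, rfl⟩
  set E : Set Ω := {ω | (∃ b, c ⬝ᵥ bhat b ω ≤ c ⬝ᵥ β) ∧ ∃ b, c ⬝ᵥ β ≤ c ⬝ᵥ bhat b ω} with hEdef
  have hcover : (Set.univ : Set Ω) ⊆ E ∪ ((⋂ b, Sp b) ∪ (⋂ b, Sq b)) := by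
    intro ω _
    by_cases h1 : ∃ b, c ⬝ᵥ bhat b ω ≤ c ⬝ᵥ β
    · by_cases h2 : ∃ b, c ⬝ᵥ β ≤ c ⬝ᵥ bhat b ω
      · exact Or.inl ⟨h1, h2⟩
      · push_neg at h2
        refine Or.inr (Or.inr (Set.mem_iInter.mpr fun b => ?_))
        simp only [hSqdef, Set.mem_setOf_eq]
        linarith [h2 b]
    · push_neg at h1
      refine Or.inr (Or.inl (Set.mem_iInter.mpr fun b => ?_))
      simp only [hSpdef, Set.mem_setOf_eq]
      linarith [h1 b]
  have hsub : (1 : ℝ) ≤ (μ E).toReal + ((μ (⋂ b, Sp b)).toReal + (μ (⋂ b, Sq b)).toReal) := by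
    have h1 : μ (Set.univ : Set Ω) ≤ μ E + (μ (⋂ b, Sp b) + μ (⋂ b, Sq b)) :=
      le_trans (measure_mono hcover) (le_trans (measure_union_le _ _)
        (add_le_add le_rfl (measure_union_le _ _)))
    have h2 := ENNReal.toReal_mono (by finiteness) h1
    rw [ENNReal.toReal_add (measure_ne_top _ _) (by finiteness),
      ENNReal.toReal_add (measure_ne_top _ _) (measure_ne_top _ _)] at h2
    simpa using h2
  have hAr : (μ (⋂ b, Sp b)).toReal = ∏ b, p b := by
    rw [hA, ENNReal.toReal_prod]
  have hCr : (μ (⋂ b, Sq b)).toReal = ∏ b, q b := by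
    rw [hC, ENNReal.toReal_prod]
  -- key combinatorial bound
  set p' : ℕ → ℝ := fun i => if h : i < B then p ⟨i, h⟩ else 1/2 with hp'def
  set q' : ℕ → ℝ := fun i => if h : i < B then q ⟨i, h⟩ else 1/2 with hq'def
  have hkey : ∏ b, p b + ∏ b, q b ≤ a ^ B + (1 - a) ^ B := by
    have e1 : ∏ b, p b = ∏ i ∈ range B, p' i := by
      rw [← Fin.prod_univ_eq_prod_range]
      exact Finset.prod_congr rfl fun i _ => by simp [hp'def, i.isLt]
    have e2 : ∏ b, q b = ∏ i ∈ range B, q' i := by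
      rw [← Fin.prod_univ_eq_prod_range]
      exact Finset.prod_congr rfl fun i _ => by simp [hq'def, i.isLt]
    rw [e1, e2]
    apply hulc_aux a ha0 ha2 B p' q'
    · intro i; rw [hp'def]; dsimp only; split
      · exact hpa _
      · linarith
    · intro i; rw [hq'def]; dsimp only; split
      · exact hqa _
      · linarith
    · intro i; rw [hp'def, hq'def]; dsimp only; split
      · exact hpq1 _
      · norm_num
  have hone : (1 / 2 + Δ : ℝ) = 1 - a := by rw [hadef]; ring
  rw [hone]
  rw [hAr, hCr] at hsub
  linarith [hsub, hkey]
end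

section
/- Let $T$ be a real random variable, $\hat\sigma > 0$ and $\sigma > 0$ random and deterministic positive scalars respectively, and $N: \mathbb{R} \to [0,1]$ a differentiable function with $\sup_{x}|x N'(x)| \leq \kappa < \infty$. Suppose $\sup_{t}|\mathbb{P}(T/\sigma \leq t) - N(t)| \leq \epsilon$. Then for any $\delta \in (0, 1/2]$: $\sup_{t \in \mathbb{R}}\left|\mathbb{P}\left(\frac{T}{\hat\sigma} \leq t\right) - N(t)\right| \leq \epsilon + \frac{2\kappa\delta}{1-\delta} + \mathbb{P}\left(\left|\frac{\hat\sigma}{\sigma} - 1\right| > \delta\right)$. -/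
open MeasureTheory

lemma stmt17_key (N : ℝ → ℝ) (hNd : Differentiable ℝ N) (κ δ : ℝ)
    (hκ : ∀ x, |x * deriv N x| ≤ κ) (hδ0 : 0 < δ) (hδ1 : δ ≤ 1/2) :
    ∀ t u : ℝ, |u - 1| ≤ δ → |N (u * t) - N t| ≤ κ * δ / (1 - δ) := by
  have hκ0 : 0 ≤ κ := by have := hκ 0; simpa using this
  have h1δ : 0 < 1 - δ := by linarith
  intro t u hu
  obtain ⟨hu1, hu2⟩ := abs_le.mp hu
  rcases eq_or_ne (u * t) t with h | h
  · rw [h, sub_self, abs_zero]; positivity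
  · have ht0 : t ≠ 0 := by rintro rfl; simp at h
    set a := min (u * t) t with ha
    set b := max (u * t) t with hb
    have hab : a < b := min_lt_max.mpr h
    obtain ⟨c, hc, hc'⟩ := exists_hasDerivAt_eq_slope N (deriv N) hab
      hNd.continuous.continuousOn (fun x _ => (hNd x).hasDerivAt)
    have hba : N b - N a = deriv N c * (b - a) := by
      have hne : b - a ≠ 0 := sub_ne_zero.mpr hab.ne'
      rw [eq_div_iff hne] at hc'
      linarith
    have hkey : |N (u * t) - N t| = |deriv N c| * |u * t - t| := by
      rcases le_total (u * t) t with hle | hle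
      · have h1 : a = u * t := min_eq_left hle
        have h2 : b = t := max_eq_right hle
        rw [h1, h2] at hba
        rw [abs_sub_comm, hba, abs_mul, abs_sub_comm (u*t) t]
      · have h1 : a = t := min_eq_right hle
        have h2 : b = u * t := max_eq_left hle
        rw [h1, h2] at hba
        rw [hba, abs_mul]
    have hcabs : (1 - δ) * |t| ≤ |c| := by
      rcases lt_or_gt_of_ne ht0 with htn | htp
      · -- t < 0 : b ≤ (1-δ) t
        have hub : u * t ≤ (1 - δ) * t := by nlinarith
        have htb : t ≤ (1 - δ) * t := by nlinarith
        have : c < (1 - δ) * t := lt_of_lt_of_le hc.2 (max_le hub htb)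
        rw [abs_of_neg htn, abs_of_neg (by nlinarith : c < 0)]
        linarith
      · have hua : (1 - δ) * t ≤ u * t := by nlinarith
        have hta : (1 - δ) * t ≤ t := by nlinarith
        have : (1 - δ) * t < c := lt_of_le_of_lt (le_min hua hta) hc.1
        rw [abs_of_pos htp, abs_of_pos (by nlinarith : 0 < c)]
        linarith
    have hcd : |c| * |deriv N c| ≤ κ := by
      have := hκ c; rwa [abs_mul] at this
    have hut : |u * t - t| ≤ δ * |t| := by
      have : u * t - t = (u - 1) * t := by ring
      rw [this, abs_mul]
      exact mul_le_mul_of_nonneg_right hu (abs_nonneg t)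
    rw [hkey, le_div_iff₀ h1δ]
    have ht0' : 0 < |t| := abs_pos.mpr ht0
    have s1 : |deriv N c| * |u * t - t| * (1 - δ) ≤ |deriv N c| * (δ * |t|) * (1 - δ) :=
      mul_le_mul_of_nonneg_right (mul_le_mul_of_nonneg_left hut (abs_nonneg (deriv N c))) h1δ.le
    have s3 : |deriv N c| * ((1 - δ) * |t|) ≤ |deriv N c| * |c| :=
      mul_le_mul_of_nonneg_left hcabs (abs_nonneg _)
    have s4 : |deriv N c| * |c| ≤ κ := by rw [mul_comm]; exact hcd
    have s5 : δ * (|deriv N c| * ((1 - δ) * |t|)) ≤ δ * κ :=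
      mul_le_mul_of_nonneg_left (le_trans s3 s4) hδ0.le
    nlinarith [s1, s5]


lemma stmt17_meas {Ω : Type*} [MeasurableSpace Ω] (μ : Measure Ω) [IsProbabilityMeasure μ]
    {A S B : Set Ω} (h : A ⊆ S ∪ B) : (μ A).toReal ≤ (μ S).toReal + (μ B).toReal := by
  have h1 : μ A ≤ μ S + μ B := (measure_mono h).trans (measure_union_le _ _)
  have h2 := ENNReal.toReal_mono
    (ENNReal.add_ne_top.mpr ⟨measure_ne_top μ _, measure_ne_top μ _⟩) h1
  rwa [ENNReal.toReal_add (measure_ne_top μ _) (measure_ne_top μ _)] at h2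

/-- Studentization lemma: if `sup_t |P(T/σ ≤ t) - N(t)| ≤ ε` where `N` is
differentiable with `sup_x |x N'(x)| ≤ κ` and values in `[0,1]`, then for `δ ∈ (0, 1/2]`,
`sup_t |P(T/σ̂ ≤ t) - N(t)| ≤ ε + 2κδ/(1-δ) + P(|σ̂/σ - 1| > δ)`. -/
theorem stmt17 {Ω : Type*} [MeasurableSpace Ω] (μ : Measure Ω) [IsProbabilityMeasure μ]
    (T : Ω → ℝ) (shat : Ω → ℝ) (hshat : ∀ ω, 0 < shat ω)
    (s : ℝ) (hs : 0 < s)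
    (N : ℝ → ℝ) (hNd : Differentiable ℝ N)
    (hNrange : ∀ x, N x ∈ Set.Icc (0 : ℝ) 1)
    (κ : ℝ) (hκ : ∀ x, |x * deriv N x| ≤ κ)
    (ε : ℝ) (hε : ∀ t, |(μ {ω | T ω / s ≤ t}).toReal - N t| ≤ ε)
    (δ : ℝ) (hδ0 : 0 < δ) (hδ1 : δ ≤ 1 / 2) :
    ∀ t, |(μ {ω | T ω / shat ω ≤ t}).toReal - N t| ≤
      ε + 2 * κ * δ / (1 - δ) + (μ {ω | δ < |shat ω / s - 1|}).toReal := by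
  intro t
  have hκ0 : 0 ≤ κ := by simpa using hκ 0
  have h1δ : 0 < 1 - δ := by linarith
  have hkeyN := stmt17_key N hNd κ δ hκ hδ0 hδ1
  have habs : ∀ ω, ¬ δ < |shat ω / s - 1| →
      (1 - δ) * s ≤ shat ω ∧ shat ω ≤ (1 + δ) * s := by
    intro ω hB
    push_neg at hB
    obtain ⟨l, r⟩ := abs_le.mp hB
    constructor
    · exact (le_div_iff₀ hs).mp (by linarith : 1 - δ ≤ shat ω / s)
    · exact (div_le_iff₀ hs).mp (by linarith : shat ω / s ≤ 1 + δ)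
  have k1 := abs_le.mp (hkeyN t (1 + δ)
    (by rw [show (1:ℝ) + δ - 1 = δ by ring, abs_of_pos hδ0]))
  have k2 := abs_le.mp (hkeyN t (1 - δ)
    (by rw [show (1:ℝ) - δ - 1 = -δ by ring, abs_neg, abs_of_pos hδ0]))
  have h2κ : κ * δ / (1 - δ) ≤ 2 * κ * δ / (1 - δ) := by
    rw [div_le_div_iff₀ h1δ h1δ]; nlinarith [mul_nonneg (mul_nonneg hκ0 hδ0.le) h1δ.le]
  rcases le_or_gt 0 t with ht | ht
  · -- t ≥ 0
    have hup : {ω | T ω / shat ω ≤ t} ⊆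
        {ω | T ω / s ≤ (1 + δ) * t} ∪ {ω | δ < |shat ω / s - 1|} := by
      intro ω hω
      by_cases hB : δ < |shat ω / s - 1|
      · exact Or.inr hB
      · left
        obtain ⟨hl, hr⟩ := habs ω hB
        have hT : T ω ≤ t * shat ω := (div_le_iff₀ (hshat ω)).mp hω
        show T ω / s ≤ (1 + δ) * t
        rw [div_le_iff₀ hs]
        nlinarith
    have hlo : {ω | T ω / s ≤ (1 - δ) * t} ⊆
        {ω | T ω / shat ω ≤ t} ∪ {ω | δ < |shat ω / s - 1|} := by
      intro ω hω
      by_cases hB : δ < |shat ω / s - 1|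
      · exact Or.inr hB
      · left
        obtain ⟨hl, hr⟩ := habs ω hB
        have hT : T ω ≤ (1 - δ) * t * s := (div_le_iff₀ hs).mp hω
        show T ω / shat ω ≤ t
        rw [div_le_iff₀ (hshat ω)]
        nlinarith
    have m1 := stmt17_meas μ hup
    have m2 := stmt17_meas μ hlo
    have e1 := abs_le.mp (hε ((1 + δ) * t))
    have e2 := abs_le.mp (hε ((1 - δ) * t))
    rw [abs_le]
    constructor
    · linarith [m2, e2.1, e2.2, k2.1, k2.2]
    · linarith [m1, e1.1, e1.2, k1.1, k1.2]
  · -- t < 0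
    have hup : {ω | T ω / shat ω ≤ t} ⊆
        {ω | T ω / s ≤ (1 - δ) * t} ∪ {ω | δ < |shat ω / s - 1|} := by
      intro ω hω
      by_cases hB : δ < |shat ω / s - 1|
      · exact Or.inr hB
      · left
        obtain ⟨hl, hr⟩ := habs ω hB
        have hT : T ω ≤ t * shat ω := (div_le_iff₀ (hshat ω)).mp hω
        show T ω / s ≤ (1 - δ) * t
        rw [div_le_iff₀ hs]
        nlinarith
    have hlo : {ω | T ω / s ≤ (1 + δ) * t} ⊆
        {ω | T ω / shat ω ≤ t} ∪ {ω | δ < |shat ω / s - 1|} := by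
      intro ω hω
      by_cases hB : δ < |shat ω / s - 1|
      · exact Or.inr hB
      · left
        obtain ⟨hl, hr⟩ := habs ω hB
        have hT : T ω ≤ (1 + δ) * t * s := (div_le_iff₀ hs).mp hω
        show T ω / shat ω ≤ t
        rw [div_le_iff₀ (hshat ω)]
        nlinarith
    have m1 := stmt17_meas μ hup
    have m2 := stmt17_meas μ hlo
    have e1 := abs_le.mp (hε ((1 - δ) * t))
    have e2 := abs_le.mp (hε ((1 + δ) * t))
    rw [abs_le]
    constructor
    · linarith [m2, e2.1, e2.2, k1.1, k1.2]
    · linarith [m1, e1.1, e1.2, k2.1, k2.2]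
end
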